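/- For every f ∈ C(K,ℝ) with ℰ(f) < ∞, the Kuramoto energies converge to the Dirichlet energy along the constant sequence: limₙ 𝒥ₙ(f) = ℰ(f). -/

import Mathlib

open Filter
open scoped ENNReal

noncomputable section

/-- Vertices of the base triangle. -/
def sgv1 : ℝ × ℝ := (0, 0)
def sgv2 : ℝ × ℝ := (1/2, Real.sqrt 3 / 2)
def sgv3 : ℝ × ℝ := (1, 0)

def sgvtx : Fin 3 → ℝ × ℝ
  | 0 => sgv1
  | 1 => sgv2
  | 2 => sgv3

/-- The contraction `F_i(x) = (x - v_i)/2 + v_i = (x + v_i)/2`. -/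
def sgF (i : Fin 3) (x : ℝ × ℝ) : ℝ × ℝ := (1/2 : ℝ) • (x + sgvtx i)

/-- `F_w = F_{w₁} ∘ ⋯ ∘ F_{wₙ}` (empty word gives the identity). -/
def sgFw (w : List (Fin 3)) : ℝ × ℝ → ℝ × ℝ :=
  w.foldr (fun i g => sgF i ∘ g) id

instance : DecidableEq (ℝ × ℝ) := Classical.decEq _

/-- The vertex sets `Vₙ`. -/
def sgV : ℕ → Finset (ℝ × ℝ)
  | 0 => {sgv1, sgv2, sgv3}
  | n + 1 => Finset.univ.biUnion fun i : Fin 3 => (sgV n).image (sgF i)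

/-- Adjacency on `Γₙ`: distinct points lying in a common image `F_w(V₀)`, `|w| = n`. -/
def sgAdj (n : ℕ) (x y : ℝ × ℝ) : Prop :=
  x ≠ y ∧ ∃ w : List (Fin 3), w.length = n ∧
    x ∈ (sgV 0).image (sgFw w) ∧ y ∈ (sgV 0).image (sgFw w)

open Classical in
/-- Discrete Dirichlet energy `ℰₙ` (each undirected edge counted once: we sum
over ordered pairs and halve). -/
def sgE (n : ℕ) (f : ℝ × ℝ → ℝ) : ℝ :=
  (5/3 : ℝ) ^ n * ((1:ℝ)/2) *
    ∑ x ∈ sgV n, ∑ y ∈ sgV n, if sgAdj n x y then (f y - f x) ^ 2 / 2 else 0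

open Classical in
/-- Discrete Kuramoto energy `𝒥ₙ` (each undirected edge counted once). -/
def sgJ (n : ℕ) (f : ℝ × ℝ → ℝ) : ℝ :=
  (5/3 : ℝ) ^ n * (1 / (4 * Real.pi ^ 2)) * ((1:ℝ)/2) *
    ∑ x ∈ sgV n, ∑ y ∈ sgV n,
      if sgAdj n x y then 1 - Real.cos (2 * Real.pi * (f y - f x)) else 0

open Classical in
/-- Discrete Laplacian `Δₘ`. -/
def sgLap (m : ℕ) (f : ℝ × ℝ → ℝ) (x : ℝ × ℝ) : ℝ :=
  (5/3 : ℝ) ^ m * ∑ y ∈ sgV m, if sgAdj m x y then f y - f x else 0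

/-- `ℰ(f) = supₙ ℰₙ(f) ∈ [0,∞]`. -/
def sgEtot (f : ℝ × ℝ → ℝ) : ℝ≥0∞ :=
  ⨆ n : ℕ, ENNReal.ofReal (sgE n f)

/-- The circle `𝕋 = ℝ/ℤ`. -/
abbrev 𝕋c := AddCircle (1 : ℝ)

/-- `HasWinding c k`: the loop `c : [0,1] → 𝕋` admits a continuous lift `ĉ` with
`ĉ(1) - ĉ(0) = k`. -/
def HasWinding (c : ℝ → 𝕋c) (k : ℤ) : Prop :=
  ∃ ch : ℝ → ℝ, ContinuousOn ch (Set.Icc 0 1) ∧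
    (∀ t ∈ Set.Icc (0:ℝ) 1, ((ch t : ℝ) : 𝕋c) = c t) ∧ ch 1 - ch 0 = (k : ℝ)

/-- Constant-speed clockwise parametrization of `∂T` starting at the leftmost
vertex `v₁`, passing through `v₂` and then `v₃`. -/
def sgc0 (t : ℝ) : ℝ × ℝ :=
  if t ≤ 1/3 then sgv1 + (3 * t) • (sgv2 - sgv1)
  else if t ≤ 2/3 then sgv2 + (3 * t - 1) • (sgv3 - sgv2)
  else sgv3 + (3 * t - 2) • (sgv1 - sgv3)

/-- Constant-speed clockwise parametrization of `∂T_w` starting at its leftmost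
vertex `F_w(v₁)`. -/
def sgcw (w : List (Fin 3)) (t : ℝ) : ℝ × ℝ := sgFw w (sgc0 t)


instance : Fact ((0:ℝ) < 1) := ⟨one_pos⟩

/-- `cos(2πθ)` for `θ ∈ 𝕋` (well defined via any representative). -/
def cosT (θ : 𝕋c) : ℝ :=
  Real.cos (2 * Real.pi * ((AddCircle.equivIco 1 0 θ : ℝ)))

open Classical in
/-- The `𝕋`-valued Kuramoto energy `𝒥ₙ` (each undirected edge counted once). -/
def sgJT (n : ℕ) (u : ℝ × ℝ → 𝕋c) : ℝ :=
  (5/3 : ℝ) ^ n * (1 / (4 * Real.pi ^ 2)) * ((1:ℝ)/2) *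
    ∑ x ∈ sgV n, ∑ y ∈ sgV n,
      if sgAdj n x y then 1 - cosT (u y - u x) else 0

-- ### auxiliary geometry

namespace SGaux

lemma sqrt3_pos : (0:ℝ) < Real.sqrt 3 := Real.sqrt_pos.2 (by norm_num)

lemma sqrt3_ne : (Real.sqrt 3 : ℝ) ≠ 0 := ne_of_gt sqrt3_pos

/-- barycentric coordinate functionals -/
def sgB : Fin 3 → (ℝ × ℝ) → ℝ
  | 0, p => 1 - (2 * p.2 / Real.sqrt 3) - (p.1 - p.2 / Real.sqrt 3)
  | 1, p => 2 * p.2 / Real.sqrt 3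
  | 2, p => p.1 - p.2 / Real.sqrt 3

lemma sgB_sum (p : ℝ × ℝ) : sgB 0 p + sgB 1 p + sgB 2 p = 1 := by
  simp [sgB]; ring

lemma sgB_vtx (i j : Fin 3) : sgB i (sgvtx j) = if i = j then 1 else 0 := by
  fin_cases i <;> fin_cases j <;>
    simp [sgB, sgvtx, sgv1, sgv2, sgv3] <;> field_simp <;> norm_num

lemma sgF_coord (j : Fin 3) (p : ℝ × ℝ) :
    sgF j p = ((p.1 + (sgvtx j).1)/2, (p.2 + (sgvtx j).2)/2) := by
  simp [sgF, Prod.smul_def, smul_eq_mul]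
  constructor <;> ring

lemma sgB_F (i j : Fin 3) (p : ℝ × ℝ) :
    sgB i (sgF j p) = (sgB i p + if i = j then 1 else 0) / 2 := by
  rw [sgF_coord]
  fin_cases i <;> fin_cases j <;>
    simp [sgB, sgvtx, sgv1, sgv2, sgv3] <;> field_simp <;> ring

/-- the filled triangle -/
def sgT : Set (ℝ × ℝ) := {p | ∀ i, 0 ≤ sgB i p}

lemma vtx_mem_T (j : Fin 3) : sgvtx j ∈ sgT := by
  intro i; rw [sgB_vtx]; split <;> norm_num

lemma sgF_mem_T {p : ℝ × ℝ} (j : Fin 3) (hp : p ∈ sgT) : sgF j p ∈ sgT := by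
  intro i; rw [sgB_F]; have := hp i; split <;> linarith

lemma sgB_self_F {p : ℝ × ℝ} (j : Fin 3) (hp : p ∈ sgT) :
    1/2 ≤ sgB j (sgF j p) := by
  rw [sgB_F]; have := hp j; simp; linarith

lemma point_eq_of_B {p q : ℝ × ℝ} (h1 : sgB 1 p = sgB 1 q)
    (h2 : sgB 2 p = sgB 2 q) : p = q := by
  simp only [sgB] at h1 h2
  have e2 : p.2 = q.2 := by
    field_simp at h1; exact h1
  have e1 : p.1 = q.1 := by
    rw [e2] at h2; linarith
  exact Prod.ext e1 e2

lemma tri_aux {b : Fin 3 → ℝ} {i j : Fin 3} (hij : i ≠ j)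
    (e0 : 0 ≤ b 0) (e1 : 0 ≤ b 1) (e2 : 0 ≤ b 2)
    (hs : b 0 + b 1 + b 2 = 1) (hi : 1/2 ≤ b i) (hj : 1/2 ≤ b j) (k : Fin 3) :
    b k = if k = i ∨ k = j then 1/2 else 0 := by
  fin_cases i <;> fin_cases j <;> fin_cases k <;> simp_all <;> linarith

lemma sgB_half {i j : Fin 3} (hij : i ≠ j) {x : ℝ × ℝ}
    (hx : x ∈ sgF i '' sgT) (hx' : x ∈ sgF j '' sgT) (k : Fin 3) :
    sgB k x = if k = i ∨ k = j then 1/2 else 0 := by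
  obtain ⟨p, hp, hpx⟩ := hx
  obtain ⟨q, hq, hqx⟩ := hx'
  have h0 : ∀ m, 0 ≤ sgB m x := by rw [← hpx]; exact sgF_mem_T i hp
  have hi : 1/2 ≤ sgB i x := by rw [← hpx]; exact sgB_self_F i hp
  have hj : 1/2 ≤ sgB j x := by rw [← hqx]; exact sgB_self_F j hq
  exact tri_aux (b := fun m => sgB m x) hij (h0 0) (h0 1) (h0 2) (sgB_sum x) hi hj k

lemma inter_eq {i j : Fin 3} (hij : i ≠ j) {x y : ℝ × ℝ}
    (hx : x ∈ sgF i '' sgT) (hx' : x ∈ sgF j '' sgT)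
    (hy : y ∈ sgF i '' sgT) (hy' : y ∈ sgF j '' sgT) : x = y := by
  apply point_eq_of_B
  · rw [sgB_half hij hx hx' 1, sgB_half hij hy hy' 1]
  · rw [sgB_half hij hx hx' 2, sgB_half hij hy hy' 2]

-- ### words

lemma sgFw_nil : sgFw [] = id := rfl

lemma sgFw_cons (i : Fin 3) (l : List (Fin 3)) :
    sgFw (i :: l) = sgF i ∘ sgFw l := rfl

lemma sgFw_append (l₁ l₂ : List (Fin 3)) :
    sgFw (l₁ ++ l₂) = sgFw l₁ ∘ sgFw l₂ := by
  induction l₁ with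
  | nil => rfl
  | cons i t ih => simp [List.cons_append, sgFw_cons, ih, Function.comp_assoc]

lemma sgF_injective (i : Fin 3) : Function.Injective (sgF i) := by
  intro a b h
  have h' : a + sgvtx i = b + sgvtx i :=
    smul_right_injective (ℝ × ℝ) (by norm_num : (1/2 : ℝ) ≠ 0) h
  exact add_right_cancel h'

lemma sgFw_injective (w : List (Fin 3)) : Function.Injective (sgFw w) := by
  induction w with
  | nil => exact fun a b h => h
  | cons i t ih => exact (sgF_injective i).comp ih

lemma sgFw_image_T (w : List (Fin 3)) : sgFw w '' sgT ⊆ sgT := by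
  induction w with
  | nil => simp [sgFw_nil]
  | cons i t ih =>
    rw [sgFw_cons, Set.image_comp]
    rintro x ⟨y, hy, rfl⟩
    exact sgF_mem_T i (ih hy)

lemma word_unique : ∀ (w w' : List (Fin 3)), w.length = w'.length →
    ∀ x y : ℝ × ℝ, x ≠ y →
    x ∈ sgFw w '' sgT → y ∈ sgFw w '' sgT →
    x ∈ sgFw w' '' sgT → y ∈ sgFw w' '' sgT → w = w' := by
  intro w
  induction w with
  | nil =>
    intro w' hl _ _ _ _ _ _ _
    simpa using (hl.symm : w'.length = 0)
  | cons i t ih =>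
    intro w' hl x y hxy hx hy hx' hy'
    cases w' with
    | nil => simp at hl
    | cons j t' =>
      rw [sgFw_cons, Set.image_comp] at hx hy hx' hy'
      by_cases hij : i = j
      · subst hij
        obtain ⟨a, ha, rfl⟩ := hx
        obtain ⟨b, hb, hby⟩ := hy
        obtain ⟨a', ha', hax'⟩ := hx'
        obtain ⟨b', hb', hby'⟩ := hy'
        have ea : a' = a := sgF_injective i hax'
        have eb : b' = b := sgF_injective i (hby'.trans hby.symm)
        have hab : a ≠ b := fun h => hxy (by rw [h, hby])
        have := ih t' (by simpa using hl) a b hab ha hb (ea ▸ ha') (eb ▸ hb')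
        rw [this]
      · exfalso
        apply hxy
        have hx1 : x ∈ sgF i '' sgT :=
          Set.image_mono (sgFw_image_T t) hx
        have hy1 : y ∈ sgF i '' sgT :=
          Set.image_mono (sgFw_image_T t) hy
        have hx2 : x ∈ sgF j '' sgT :=
          Set.image_mono (sgFw_image_T t') hx'
        have hy2 : y ∈ sgF j '' sgT :=
          Set.image_mono (sgFw_image_T t') hy'
        exact inter_eq hij hx1 hx2 hy1 hy2

lemma sgvtx_injective : Function.Injective sgvtx := by
  have h : Real.sqrt 3 / 2 ≠ 0 := by positivity
  intro a b hab
  fin_cases a <;> fin_cases b <;>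
    simp_all [sgvtx, sgv1, sgv2, sgv3, Prod.ext_iff]

lemma mem_sgV0 (i : Fin 3) : sgvtx i ∈ sgV 0 := by
  fin_cases i <;> simp [sgV, sgvtx]

lemma mem_sgV0_iff {u : ℝ × ℝ} : u ∈ sgV 0 ↔ ∃ i, u = sgvtx i := by
  constructor
  · intro h
    simp only [sgV, Finset.mem_insert, Finset.mem_singleton] at h
    rcases h with h | h | h
    exacts [⟨0, h⟩, ⟨1, h⟩, ⟨2, h⟩]
  · rintro ⟨i, rfl⟩; exact mem_sgV0 i

lemma word_mem_V : ∀ (w : List (Fin 3)) (u : ℝ × ℝ), u ∈ sgV 0 →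
    sgFw w u ∈ sgV w.length := by
  intro w
  induction w with
  | nil => intro u hu; simpa [sgFw_nil] using hu
  | cons i t ih =>
    intro u hu
    show sgFw (i :: t) u ∈ sgV (t.length + 1)
    rw [sgV]
    apply Finset.mem_biUnion.2
    exact ⟨i, Finset.mem_univ i, Finset.mem_image.2 ⟨sgFw t u, ih u hu, rfl⟩⟩
-- ### the cell decomposition of the adjacency sum

open Classical in
lemma sum_adj (n : ℕ) (G : ℝ × ℝ → ℝ × ℝ → ℝ) :
    (∑ x ∈ sgV n, ∑ y ∈ sgV n, if sgAdj n x y then G x y else 0)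
    = ∑ w : Fin n → Fin 3, ∑ i : Fin 3, ∑ j : Fin 3,
        if i ≠ j then G (sgFw (List.ofFn w) (sgvtx i)) (sgFw (List.ofFn w) (sgvtx j))
        else 0 := by
  classical
  have hL : (∑ x ∈ sgV n, ∑ y ∈ sgV n, if sgAdj n x y then G x y else 0)
      = ∑ p ∈ (sgV n ×ˢ sgV n).filter (fun p => sgAdj n p.1 p.2), G p.1 p.2 := by
    rw [Finset.sum_filter, ← Finset.sum_product']
  have hR : (∑ w : Fin n → Fin 3, ∑ i : Fin 3, ∑ j : Fin 3,
        if i ≠ j then G (sgFw (List.ofFn w) (sgvtx i)) (sgFw (List.ofFn w) (sgvtx j))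
        else 0)
      = ∑ z ∈ (Finset.univ.filter
            (fun z : (Fin n → Fin 3) × Fin 3 × Fin 3 => z.2.1 ≠ z.2.2)),
          G (sgFw (List.ofFn z.1) (sgvtx z.2.1)) (sgFw (List.ofFn z.1) (sgvtx z.2.2)) := by
    rw [Finset.sum_filter, Fintype.sum_prod_type]
    refine Finset.sum_congr rfl fun w _ => ?_
    rw [Fintype.sum_prod_type]
  rw [hL, hR]
  symm
  refine Finset.sum_bij
    (fun z _ => (sgFw (List.ofFn z.1) (sgvtx z.2.1), sgFw (List.ofFn z.1) (sgvtx z.2.2)))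
    ?_ ?_ ?_ ?_
  · -- membership
    intro z hz
    have hzne : z.2.1 ≠ z.2.2 := (Finset.mem_filter.1 hz).2
    have hmem : ∀ i : Fin 3, sgFw (List.ofFn z.1) (sgvtx i) ∈ sgV n := by
      intro i
      have := word_mem_V (List.ofFn z.1) (sgvtx i) (mem_sgV0 i)
      rwa [List.length_ofFn] at this
    refine Finset.mem_filter.2 ⟨Finset.mem_product.2 ⟨hmem _, hmem _⟩, ?_, ?_⟩
    · intro h
      exact hzne (sgvtx_injective (sgFw_injective _ h))
    · exact ⟨List.ofFn z.1, List.length_ofFn,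
        Finset.mem_image.2 ⟨sgvtx z.2.1, mem_sgV0 _, rfl⟩,
        Finset.mem_image.2 ⟨sgvtx z.2.2, mem_sgV0 _, rfl⟩⟩
  · -- injectivity
    intro a ha b hb hab
    have hane : a.2.1 ≠ a.2.2 := (Finset.mem_filter.1 ha).2
    rw [Prod.mk.injEq] at hab
    obtain ⟨h1, h2⟩ := hab
    have hxy : sgFw (List.ofFn a.1) (sgvtx a.2.1) ≠ sgFw (List.ofFn a.1) (sgvtx a.2.2) :=
      fun h => hane (sgvtx_injective (sgFw_injective _ h))
    have hmemT : ∀ (w : List (Fin 3)) (i : Fin 3),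
        sgFw w (sgvtx i) ∈ sgFw w '' sgT :=
      fun w i => ⟨sgvtx i, vtx_mem_T i, rfl⟩
    have hw : List.ofFn a.1 = List.ofFn b.1 := by
      refine word_unique _ _ (by simp) _ _ hxy
        (hmemT _ _) (hmemT _ _) (h1 ▸ hmemT _ _) (h2 ▸ hmemT _ _)
    have hw1 : a.1 = b.1 := List.ofFn_injective hw
    rw [← hw] at h1 h2
    have e1 : a.2.1 = b.2.1 := sgvtx_injective (sgFw_injective _ h1)
    have e2 : a.2.2 = b.2.2 := sgvtx_injective (sgFw_injective _ h2)
    exact Prod.ext hw1 (Prod.ext e1 e2)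
  · -- surjectivity
    intro p hp
    obtain ⟨hps, hne, w, hlen, hx, hy⟩ :
        (p ∈ sgV n ×ˢ sgV n) ∧ p.1 ≠ p.2 ∧ ∃ w : List (Fin 3), w.length = n ∧
          p.1 ∈ (sgV 0).image (sgFw w) ∧ p.2 ∈ (sgV 0).image (sgFw w) := by
      have := Finset.mem_filter.1 hp
      exact ⟨this.1, this.2.1, this.2.2⟩
    subst hlen
    obtain ⟨u, hu, hux⟩ := Finset.mem_image.1 hx
    obtain ⟨v, hv, hvy⟩ := Finset.mem_image.1 hy
    obtain ⟨i, rfl⟩ := mem_sgV0_iff.1 hu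
    obtain ⟨j, rfl⟩ := mem_sgV0_iff.1 hv
    refine ⟨(w.get, i, j), ?_, ?_⟩
    · refine Finset.mem_filter.2 ⟨Finset.mem_univ _, ?_⟩
      intro h
      have h' : i = j := h
      exact hne (by rw [← hux, ← hvy, h'])
    · simp only [List.ofFn_get]
      rw [hux, hvy]
  · -- values
    intro a ha
    rfl
-- ### monotonicity of the discrete energies

lemma sum_snoc {n : ℕ} (g : (Fin (n+1) → Fin 3) → ℝ) :
    ∑ w' : Fin (n+1) → Fin 3, g w'
    = ∑ w : Fin n → Fin 3, ∑ i : Fin 3, g (Fin.snoc w i) := by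
  have hbij : Function.Bijective
      (fun z : (Fin n → Fin 3) × Fin 3 => (Fin.snoc z.1 z.2 : Fin (n+1) → Fin 3)) := by
    constructor
    · intro z z' h
      have h1 : z.1 = z'.1 := by
        funext k
        have := congrFun h k.castSucc
        simpa using this
      have h2 : z.2 = z'.2 := by
        have := congrFun h (Fin.last n)
        simpa using this
      exact Prod.ext h1 h2
    · intro w
      refine ⟨(fun k => w k.castSucc, w (Fin.last n)), ?_⟩
      funext k
      refine Fin.lastCases ?_ (fun i => ?_) k <;> simp
  have h2 := Fintype.sum_bijective _ hbij
    (fun z : (Fin n → Fin 3) × Fin 3 => g (Fin.snoc z.1 z.2)) g (fun z => rfl)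
  rw [← h2, Fintype.sum_prod_type]

lemma ofFn_snoc {n : ℕ} (w : Fin n → Fin 3) (i : Fin 3) :
    List.ofFn (Fin.snoc w i) = List.ofFn w ++ [i] := by
  rw [List.ofFn_succ']
  simp [List.concat_eq_append]

lemma sgF_vtx_self (i : Fin 3) : sgF i (sgvtx i) = sgvtx i := by
  unfold sgF
  rw [← two_smul ℝ (sgvtx i), smul_smul]
  norm_num

lemma sgF_vtx_symm (i j : Fin 3) : sgF i (sgvtx j) = sgF j (sgvtx i) := by
  unfold sgF
  rw [add_comm]

lemma cell_mono (f : ℝ × ℝ → ℝ) (φ : ℝ × ℝ → ℝ × ℝ) :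
    (∑ i : Fin 3, ∑ j : Fin 3,
        if i ≠ j then (f (φ (sgvtx j)) - f (φ (sgvtx i)))^2/2 else 0)
    ≤ (5/3) * ∑ k : Fin 3, ∑ i : Fin 3, ∑ j : Fin 3,
        if i ≠ j then (f (φ (sgF k (sgvtx j))) - f (φ (sgF k (sgvtx i))))^2/2 else 0 := by
  have e0 : sgF 0 (sgvtx 0) = sgvtx 0 := sgF_vtx_self 0
  have e1 : sgF 1 (sgvtx 1) = sgvtx 1 := sgF_vtx_self 1
  have e2 : sgF 2 (sgvtx 2) = sgvtx 2 := sgF_vtx_self 2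
  have s10 : sgF 1 (sgvtx 0) = sgF 0 (sgvtx 1) := sgF_vtx_symm 1 0
  have s20 : sgF 2 (sgvtx 0) = sgF 0 (sgvtx 2) := sgF_vtx_symm 2 0
  have s21 : sgF 2 (sgvtx 1) = sgF 1 (sgvtx 2) := sgF_vtx_symm 2 1
  simp only [Fin.sum_univ_three]
  norm_num [e0, e1, e2, s10, s20, s21, (by decide : ¬(0:Fin 3) = 2),
    (by decide : ¬(1:Fin 3) = 2), (by decide : ¬(2:Fin 3) = 0), (by decide : ¬(2:Fin 3) = 1)]
  set a := f (φ (sgvtx 0))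
  set b := f (φ (sgvtx 1))
  set c := f (φ (sgvtx 2))
  set x := f (φ (sgF 0 (sgvtx 1)))
  set y := f (φ (sgF 0 (sgvtx 2)))
  set z := f (φ (sgF 1 (sgvtx 2)))
  have h : (5/3) * ((x-a)^2+(y-a)^2+(y-x)^2+(x-b)^2+(z-b)^2+(z-x)^2+(y-c)^2+(z-c)^2+(z-y)^2)
      - ((b-a)^2+(c-a)^2+(c-b)^2)
      = (2/15)*((5*x-2*a-2*b-c)^2+(5*y-2*a-2*c-b)^2+(5*z-a-2*b-2*c)^2)
        + (1/15)*((5*x-5*y-b+c)^2+(5*x-5*z-a+c)^2+(5*y-5*z-a+b)^2) := by ring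
  linarith [sq_nonneg (5*x-2*a-2*b-c), sq_nonneg (5*y-2*a-2*c-b),
    sq_nonneg (5*z-a-2*b-2*c), sq_nonneg (5*x-5*y-b+c), sq_nonneg (5*x-5*z-a+c),
    sq_nonneg (5*y-5*z-a+b), h]

open Classical in
lemma sgE_eq (n : ℕ) (f : ℝ × ℝ → ℝ) :
    sgE n f = (5/3 : ℝ)^n * ((1:ℝ)/2) *
      ∑ w : Fin n → Fin 3, ∑ i : Fin 3, ∑ j : Fin 3,
        if i ≠ j then
          (f (sgFw (List.ofFn w) (sgvtx j)) - f (sgFw (List.ofFn w) (sgvtx i)))^2/2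
        else 0 := by
  unfold sgE
  rw [sum_adj n (fun x y => (f y - f x)^2/2)]

lemma sgE_nonneg (n : ℕ) (f : ℝ × ℝ → ℝ) : 0 ≤ sgE n f := by
  rw [sgE_eq]
  have : (0:ℝ) ≤ ∑ w : Fin n → Fin 3, ∑ i : Fin 3, ∑ j : Fin 3,
      if i ≠ j then
        (f (sgFw (List.ofFn w) (sgvtx j)) - f (sgFw (List.ofFn w) (sgvtx i)))^2/2
      else 0 := by
    refine Finset.sum_nonneg fun w _ => Finset.sum_nonneg fun i _ =>
      Finset.sum_nonneg fun j _ => ?_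
    split <;> positivity
  positivity

lemma sgE_mono (f : ℝ × ℝ → ℝ) : Monotone fun n => sgE n f := by
  apply monotone_nat_of_le_succ
  intro n
  rw [sgE_eq, sgE_eq]
  have hsnoc : (∑ w' : Fin (n+1) → Fin 3, ∑ i : Fin 3, ∑ j : Fin 3,
        if i ≠ j then
          (f (sgFw (List.ofFn w') (sgvtx j)) - f (sgFw (List.ofFn w') (sgvtx i)))^2/2
        else 0)
      = ∑ w : Fin n → Fin 3, ∑ k : Fin 3, ∑ i : Fin 3, ∑ j : Fin 3,
        if i ≠ j then
          (f (sgFw (List.ofFn w) (sgF k (sgvtx j)))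
            - f (sgFw (List.ofFn w) (sgF k (sgvtx i))))^2/2
        else 0 := by
    rw [sum_snoc]
    refine Finset.sum_congr rfl fun w _ => Finset.sum_congr rfl fun k _ => ?_
    refine Finset.sum_congr rfl fun i _ => Finset.sum_congr rfl fun j _ => ?_
    rw [ofFn_snoc, sgFw_append]
    rfl
  rw [hsnoc]
  have key : ∀ w : Fin n → Fin 3,
      (∑ i : Fin 3, ∑ j : Fin 3,
        if i ≠ j then
          (f (sgFw (List.ofFn w) (sgvtx j)) - f (sgFw (List.ofFn w) (sgvtx i)))^2/2
        else 0)
      ≤ (5/3) * ∑ k : Fin 3, ∑ i : Fin 3, ∑ j : Fin 3,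
        if i ≠ j then
          (f (sgFw (List.ofFn w) (sgF k (sgvtx j)))
            - f (sgFw (List.ofFn w) (sgF k (sgvtx i))))^2/2
        else 0 :=
    fun w => cell_mono f (sgFw (List.ofFn w))
  calc (5/3 : ℝ)^n * ((1:ℝ)/2) * (∑ w : Fin n → Fin 3, ∑ i : Fin 3, ∑ j : Fin 3,
        if i ≠ j then
          (f (sgFw (List.ofFn w) (sgvtx j)) - f (sgFw (List.ofFn w) (sgvtx i)))^2/2
        else 0)
      ≤ (5/3 : ℝ)^n * ((1:ℝ)/2) * (∑ w : Fin n → Fin 3, (5/3) *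
          ∑ k : Fin 3, ∑ i : Fin 3, ∑ j : Fin 3,
            if i ≠ j then
              (f (sgFw (List.ofFn w) (sgF k (sgvtx j)))
                - f (sgFw (List.ofFn w) (sgF k (sgvtx i))))^2/2
            else 0) := by
        apply mul_le_mul_of_nonneg_left (Finset.sum_le_sum fun w _ => key w)
        positivity
    _ = (5/3 : ℝ)^(n+1) * ((1:ℝ)/2) * (∑ w : Fin n → Fin 3,
          ∑ k : Fin 3, ∑ i : Fin 3, ∑ j : Fin 3,
            if i ≠ j then
              (f (sgFw (List.ofFn w) (sgF k (sgvtx j)))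
                - f (sgFw (List.ofFn w) (sgF k (sgvtx i))))^2/2
            else 0) := by
        rw [← Finset.mul_sum, pow_succ]
        ring

-- ### analytic lemmas

lemma sgE_le_toReal (f : ℝ × ℝ → ℝ) (hE : sgEtot f ≠ ⊤) (n : ℕ) :
    sgE n f ≤ (sgEtot f).toReal := by
  have h1 : ENNReal.ofReal (sgE n f) ≤ sgEtot f :=
    le_iSup (fun n => ENNReal.ofReal (sgE n f)) n
  have h2 := ENNReal.toReal_mono hE h1
  rwa [ENNReal.toReal_ofReal (sgE_nonneg n f)] at h2

lemma toReal_eq_iSup (f : ℝ × ℝ → ℝ) :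
    (sgEtot f).toReal = ⨆ n, sgE n f := by
  unfold sgEtot
  rw [ENNReal.toReal_iSup (fun n => ENNReal.ofReal_ne_top)]
  exact iSup_congr fun n => ENNReal.toReal_ofReal (sgE_nonneg n f)

lemma tendsto_sgE (f : ℝ × ℝ → ℝ) (hE : sgEtot f ≠ ⊤) :
    Filter.Tendsto (fun n => sgE n f) Filter.atTop (nhds ((sgEtot f).toReal)) := by
  rw [toReal_eq_iSup]
  exact tendsto_atTop_ciSup (sgE_mono f)
    ⟨(sgEtot f).toReal, by rintro x ⟨n, rfl⟩; exact sgE_le_toReal f hE n⟩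

open Classical in
lemma edge_sq_le {n : ℕ} {f : ℝ × ℝ → ℝ} {x y : ℝ × ℝ}
    (hx : x ∈ sgV n) (hy : y ∈ sgV n) (h : sgAdj n x y) :
    (f y - f x)^2 ≤ 4 * (3/5 : ℝ)^n * sgE n f := by
  have h1 : (f y - f x)^2/2 ≤
      ∑ x' ∈ sgV n, ∑ y' ∈ sgV n, if sgAdj n x' y' then (f y' - f x')^2/2 else 0 := by
    calc (f y - f x)^2/2
        = (if sgAdj n x y then (f y - f x)^2/2 else 0) := by rw [if_pos h]
      _ ≤ ∑ y' ∈ sgV n, if sgAdj n x y' then (f y' - f x)^2/2 else 0 :=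
          Finset.single_le_sum
            (f := fun z => if sgAdj n x z then (f z - f x)^2/2 else 0)
            (fun z _ => by split <;> positivity) hy
      _ ≤ ∑ x' ∈ sgV n, ∑ y' ∈ sgV n, if sgAdj n x' y' then (f y' - f x')^2/2 else 0 :=
          Finset.single_le_sum
            (f := fun z => ∑ y' ∈ sgV n, if sgAdj n z y' then (f y' - f z)^2/2 else 0)
            (fun z _ => Finset.sum_nonneg fun z' _ => by
              split <;> positivity) hx
  have hterm : (5/3 : ℝ)^n * ((1:ℝ)/2) * ((f y - f x)^2/2) ≤ sgE n f := by
    unfold sgE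
    exact mul_le_mul_of_nonneg_left h1 (by positivity)
  have hpow : (3/5 : ℝ)^n * (5/3 : ℝ)^n = 1 := by
    rw [← mul_pow]; norm_num
  have h2 := mul_le_mul_of_nonneg_left hterm
    (show (0:ℝ) ≤ 4 * (3/5 : ℝ)^n by positivity)
  have h3 : 4 * (3/5 : ℝ)^n * ((5/3 : ℝ)^n * ((1:ℝ)/2) * ((f y - f x)^2/2))
      = ((3/5 : ℝ)^n * (5/3 : ℝ)^n) * (f y - f x)^2 := by ring
  rw [h3, hpow, one_mul] at h2
  linarith [h2]

lemma per_edge_bound (M : ℝ) (d : ℝ) (hd2 : d^2 ≤ M)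
    (ht : |2 * Real.pi * d| ≤ 1) :
    |(1 - Real.cos (2 * Real.pi * d))/(4 * Real.pi^2) - d^2/2|
      ≤ 8 * Real.pi^2 * M * (d^2/2) := by
  have hπ : (0:ℝ) < Real.pi := Real.pi_pos
  have hcb := Real.cos_bound ht
  have habs4 : |2 * Real.pi * d|^4 = (2 * Real.pi * d)^4 := by
    rw [← abs_pow, abs_of_nonneg (by positivity)]
  rw [habs4] at hcb
  have heq : (1 - Real.cos (2 * Real.pi * d))/(4 * Real.pi^2) - d^2/2
      = -((Real.cos (2 * Real.pi * d) - (1 - (2 * Real.pi * d)^2/2))/(4 * Real.pi^2)) := by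
    field_simp
    ring
  rw [heq, abs_neg, abs_div, abs_of_nonneg (show (0:ℝ) ≤ 4 * Real.pi^2 by positivity)]
  rw [div_le_iff₀ (by positivity)]
  have h4 : d^4 ≤ M * d^2 := by nlinarith [sq_nonneg d]
  calc |Real.cos (2 * Real.pi * d) - (1 - (2 * Real.pi * d)^2/2)|
      ≤ (2 * Real.pi * d)^4 * (5/96) := hcb
    _ = (5/6) * Real.pi^4 * d^4 := by ring
    _ ≤ 4 * Real.pi^4 * (M * d^2) := by
        have h5 : (0:ℝ) < Real.pi^4 := by positivity
        nlinarith [mul_le_mul_of_nonneg_left h4 h5.le]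
    _ ≤ 8 * Real.pi^2 * M * (d^2/2) * (4 * Real.pi^2) := by
        have hM0 : 0 ≤ M := (sq_nonneg d).trans hd2
        have h6 : 0 ≤ M * d^2 := mul_nonneg hM0 (sq_nonneg d)
        have h5 : (0:ℝ) < Real.pi^4 := by positivity
        nlinarith [mul_nonneg h6 h5.le]

open Classical in
lemma sgJ_sub_sgE (n : ℕ) (f : ℝ × ℝ → ℝ) (M : ℝ) (hM0 : 0 ≤ M)
    (hM : ∀ x y : ℝ × ℝ, x ∈ sgV n → y ∈ sgV n → sgAdj n x y → (f y - f x)^2 ≤ M)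
    (hsmall : ∀ x y : ℝ × ℝ, x ∈ sgV n → y ∈ sgV n → sgAdj n x y →
      |2 * Real.pi * (f y - f x)| ≤ 1) :
    |sgJ n f - sgE n f| ≤ 8 * Real.pi^2 * M * sgE n f := by
  have hπ : (0:ℝ) < Real.pi := Real.pi_pos
  have key : ∀ x y : ℝ × ℝ,
      (if sgAdj n x y then (1 - Real.cos (2 * Real.pi * (f y - f x))) else 0)/(4 * Real.pi^2)
        - (if sgAdj n x y then (f y - f x)^2/2 else 0)
      = (if sgAdj n x y then
          ((1 - Real.cos (2 * Real.pi * (f y - f x)))/(4 * Real.pi^2) - (f y - f x)^2/2)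
        else 0) := by
    intro x y; split <;> simp
  have hdiff : sgJ n f - sgE n f = (5/3 : ℝ)^n * ((1:ℝ)/2) *
      ∑ x ∈ sgV n, ∑ y ∈ sgV n,
        (if sgAdj n x y then
          ((1 - Real.cos (2 * Real.pi * (f y - f x)))/(4 * Real.pi^2) - (f y - f x)^2/2)
        else 0) := by
    unfold sgJ sgE
    simp only [← key]
    simp only [Finset.sum_sub_distrib, ← Finset.sum_div]
    ring
  rw [hdiff]
  have habs : |∑ x ∈ sgV n, ∑ y ∈ sgV n,
      (if sgAdj n x y then
        ((1 - Real.cos (2 * Real.pi * (f y - f x)))/(4 * Real.pi^2) - (f y - f x)^2/2)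
      else 0)|
      ≤ ∑ x ∈ sgV n, ∑ y ∈ sgV n,
        (if sgAdj n x y then 8 * Real.pi^2 * M * ((f y - f x)^2/2) else 0) := by
    refine (Finset.abs_sum_le_sum_abs _ _).trans (Finset.sum_le_sum fun x hx => ?_)
    refine (Finset.abs_sum_le_sum_abs _ _).trans (Finset.sum_le_sum fun y hy => ?_)
    by_cases h : sgAdj n x y
    · rw [if_pos h, if_pos h]
      exact per_edge_bound M _ (hM x y hx hy h) (hsmall x y hx hy h)
    · rw [if_neg h, if_neg h, abs_zero]
  have hfac : ∑ x ∈ sgV n, ∑ y ∈ sgV n,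
      (if sgAdj n x y then 8 * Real.pi^2 * M * ((f y - f x)^2/2) else 0)
      = 8 * Real.pi^2 * M *
        ∑ x ∈ sgV n, ∑ y ∈ sgV n, (if sgAdj n x y then (f y - f x)^2/2 else 0) := by
    simp only [Finset.mul_sum]
    refine Finset.sum_congr rfl fun x _ => Finset.sum_congr rfl fun y _ => ?_
    split <;> simp
  rw [abs_mul, abs_of_nonneg (show (0:ℝ) ≤ (5/3 : ℝ)^n * ((1:ℝ)/2) by positivity)]
  have h2 := mul_le_mul_of_nonneg_left (habs.trans (le_of_eq hfac))
    (show (0:ℝ) ≤ (5/3 : ℝ)^n * ((1:ℝ)/2) by positivity)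
  refine h2.trans (le_of_eq ?_)
  unfold sgE
  ring

end SGaux

/-- For every `f ∈ C(K,ℝ)` with `ℰ(f) < ∞`, the Kuramoto
energies converge along the constant sequence: `limₙ 𝒥ₙ(f) = ℰ(f)`. -/
theorem statement9
    (K : Set (ℝ × ℝ)) (hKne : K.Nonempty) (hKcpt : IsCompact K)
    (hKfix : K = ⋃ i : Fin 3, sgF i '' K)
    (f : ℝ × ℝ → ℝ) (hf : ContinuousOn f K) (hE : sgEtot f < ⊤) :
    Filter.Tendsto (fun n => sgJ n f) Filter.atTop (nhds (sgEtot f).toReal) := by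
  have hfin : sgEtot f ≠ ⊤ := hE.ne
  set E := (sgEtot f).toReal with hEdef
  have hE0 : 0 ≤ E := ENNReal.toReal_nonneg
  have hEle : ∀ n, sgE n f ≤ E := SGaux.sgE_le_toReal f hfin
  have hM : ∀ (n : ℕ) (x y : ℝ × ℝ), x ∈ sgV n → y ∈ sgV n → sgAdj n x y →
      (f y - f x)^2 ≤ 4 * (3/5 : ℝ)^n * E := by
    intro n x y hx hy h
    refine (SGaux.edge_sq_le hx hy h).trans ?_
    exact mul_le_mul_of_nonneg_left (hEle n) (by positivity)
  have hpow : Filter.Tendsto (fun n : ℕ => ((3/5 : ℝ))^n) Filter.atTop (nhds 0) :=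
    tendsto_pow_atTop_nhds_zero_of_lt_one (by norm_num) (by norm_num)
  have hsmall : ∀ᶠ n in Filter.atTop, ∀ x y : ℝ × ℝ, x ∈ sgV n → y ∈ sgV n →
      sgAdj n x y → |2 * Real.pi * (f y - f x)| ≤ 1 := by
    have htendM : Filter.Tendsto (fun n : ℕ => 4 * Real.pi^2 * (4 * (3/5 : ℝ)^n * E))
        Filter.atTop (nhds 0) := by
      have h2 := hpow.const_mul (4 * Real.pi^2 * 4 * E)
      rw [mul_zero] at h2
      convert h2 using 2 with n
      ring
    have hev : ∀ᶠ n in Filter.atTop, 4 * Real.pi^2 * (4 * (3/5 : ℝ)^n * E) ≤ 1 :=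
      htendM.eventually (eventually_le_nhds (by norm_num : (0:ℝ) < 1))
    filter_upwards [hev] with n hn x y hx hy h
    have hd2 := hM n x y hx hy h
    have h2 : (2 * Real.pi * (f y - f x))^2 ≤ 1 := by
      have h3 : (2 * Real.pi * (f y - f x))^2 = 4 * Real.pi^2 * (f y - f x)^2 := by ring
      rw [h3]
      calc 4 * Real.pi^2 * (f y - f x)^2
          ≤ 4 * Real.pi^2 * (4 * (3/5 : ℝ)^n * E) :=
            mul_le_mul_of_nonneg_left hd2 (by positivity)
        _ ≤ 1 := hn
    exact (sq_le_one_iff_abs_le_one _).1 h2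
  have hbound : ∀ᶠ n in Filter.atTop,
      ‖sgJ n f - sgE n f‖ ≤ (32 * Real.pi^2 * E * E) * (3/5 : ℝ)^n := by
    filter_upwards [hsmall] with n hn
    have hb := SGaux.sgJ_sub_sgE n f (4 * (3/5 : ℝ)^n * E) (by positivity) (hM n) hn
    rw [Real.norm_eq_abs]
    refine hb.trans ?_
    calc 8 * Real.pi^2 * (4 * (3/5 : ℝ)^n * E) * sgE n f
        ≤ 8 * Real.pi^2 * (4 * (3/5 : ℝ)^n * E) * E :=
          mul_le_mul_of_nonneg_left (hEle n) (by positivity)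
      _ = (32 * Real.pi^2 * E * E) * (3/5 : ℝ)^n := by ring
  have hzero : Filter.Tendsto (fun n => sgJ n f - sgE n f) Filter.atTop (nhds 0) := by
    apply squeeze_zero_norm' hbound
    have h2 := hpow.const_mul (32 * Real.pi^2 * E * E)
    rwa [mul_zero] at h2
  have hsum := hzero.add (SGaux.tendsto_sgE f hfin)
  rw [zero_add] at hsum
  convert hsum using 2 with n
  · ring

end
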